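/- Two compact Hausdorff spaces X and Y are homeomorphic if there exist bases B and C for the closed sets of X and Y respectively, each forming a sublattice (under union and intersection) of the lattice of closed sets containing ∅ and the whole space, together with a lattice isomorphism between B and C. -/
import Mathlib

open Set

section WallmanAux

/-- A family closed under binary intersections and containing `univ` is closed under
finite intersections. -/
lemma wd_finInter {Y ι : Type*} (C : Set (Set Y)) (hCtop : Set.univ ∈ C)
    (hCinter : ∀ a ∈ C, ∀ b ∈ C, a ∩ b ∈ C) (s : Finset ι) (f : ι → Set Y)
    (hf : ∀ i ∈ s, f i ∈ C) : (⋂ i ∈ s, f i) ∈ C := by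
  classical
  induction s using Finset.induction_on with
  | empty => simpa using hCtop
  | @insert a s ha ih =>
    rw [Finset.set_biInter_insert]
    exact hCinter _ (hf a (Finset.mem_insert_self a s)) _
      (ih fun i hi => hf i (Finset.mem_insert_of_mem hi))

/-- In a compact T1 space, for every point `y` in an open set `U` there is a member of the
closed-set base containing `y` and contained in `U`. -/
lemma wd_point_in {Y : Type*} [TopologicalSpace Y] [CompactSpace Y] [T1Space Y]
    (C : Set (Set Y))
    (hCclosed : ∀ c ∈ C, IsClosed c) (hCtop : Set.univ ∈ C)
    (hCinter : ∀ a ∈ C, ∀ b ∈ C, a ∩ b ∈ C)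
    (hCbase : ∀ s : Set Y, IsClosed s → ∃ T ⊆ C, s = ⋂₀ T)
    {U : Set Y} (hU : IsOpen U) {y : Y} (hy : y ∈ U) :
    ∃ c ∈ C, y ∈ c ∧ c ⊆ U := by
  obtain ⟨T, hTC, hTeq⟩ := hCbase {y} isClosed_singleton
  have hyT : y ∈ ⋂₀ T := by rw [← hTeq]; exact mem_singleton y
  have hsub : ⋂₀ T ⊆ U := by rw [← hTeq]; simpa using hy
  have hcov : Uᶜ ⊆ ⋃ (t : T), (↑t : Set Y)ᶜ := by
    intro z hz
    have hz' : z ∉ ⋂₀ T := fun h => hz (hsub h)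
    obtain ⟨t, htT, hzt⟩ := by simpa [Set.mem_sInter] using hz'
    exact mem_iUnion.mpr ⟨⟨t, htT⟩, hzt⟩
  have hcomp : IsCompact Uᶜ := hU.isClosed_compl.isCompact
  obtain ⟨s, hs⟩ := hcomp.elim_finite_subcover (fun t : T => (↑t : Set Y)ᶜ)
    (fun t => (hCclosed _ (hTC t.2)).isOpen_compl) hcov
  refine ⟨⋂ i ∈ s, (↑i : Set Y), wd_finInter C hCtop hCinter s _
    (fun i _ => hTC i.2), mem_iInter₂.mpr fun i _ => hyT _ i.2, ?_⟩
  intro z hz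
  by_contra hzU
  obtain ⟨i, his, hzi⟩ := mem_iUnion₂.mp (hs hzU)
  exact hzi (mem_iInter₂.mp hz i his)

/-- In a T2 space with a closed-set base, two distinct points can be separated by a
covering pair from the base. -/
lemma wd_sep {Y : Type*} [TopologicalSpace Y] [T2Space Y] (C : Set (Set Y))
    (hCbase : ∀ s : Set Y, IsClosed s → ∃ T ⊆ C, s = ⋂₀ T)
    {y y' : Y} (h : y ≠ y') :
    ∃ c₁ ∈ C, ∃ c₂ ∈ C, c₁ ∪ c₂ = Set.univ ∧ y ∉ c₂ ∧ y' ∉ c₁ := by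
  obtain ⟨U, V, hUo, hVo, hyU, hy'V, hUV⟩ := t2_separation h
  obtain ⟨T, hTC, hTeq⟩ := hCbase Uᶜ hUo.isClosed_compl
  have hy2 : y ∉ ⋂₀ T := by rw [← hTeq]; simpa using hyU
  obtain ⟨c₂, hc₂T, hyc₂⟩ := by simpa [Set.mem_sInter] using hy2
  obtain ⟨S, hSC, hSeq⟩ := hCbase Vᶜ hVo.isClosed_compl
  have hy1 : y' ∉ ⋂₀ S := by rw [← hSeq]; simpa using hy'V
  obtain ⟨c₁, hc₁S, hy'c₁⟩ := by simpa [Set.mem_sInter] using hy1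
  refine ⟨c₁, hSC hc₁S, c₂, hTC hc₂T, ?_, hyc₂, hy'c₁⟩
  have h1 : Vᶜ ⊆ c₁ := by rw [hSeq]; exact sInter_subset_of_mem hc₁S
  have h2 : Uᶜ ⊆ c₂ := by rw [hTeq]; exact sInter_subset_of_mem hc₂T
  apply eq_univ_of_univ_subset
  intro z _
  by_cases hzV : z ∈ V
  · have : z ∉ U := fun hzU => (Set.disjoint_iff.mp hUV ⟨hzU, hzV⟩)
    exact Or.inr (h2 this)
  · exact Or.inl (h1 hzV)

variable {X Y : Type*} {B : Set (Set X)} {C : Set (Set Y)}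

lemma wd_map_bot (hBbot : ∅ ∈ B) (hCbot : ∅ ∈ C) (e : B ≃o C) :
    (e ⟨∅, hBbot⟩ : Set Y) = ∅ := by
  have h : (⟨∅, hBbot⟩ : B) ≤ e.symm ⟨∅, hCbot⟩ := by
    rw [← Subtype.coe_le_coe]
    exact empty_subset _
  have h2 : e ⟨∅, hBbot⟩ ≤ ⟨∅, hCbot⟩ := by
    rw [OrderIso.le_symm_apply] at h
    exact h
  exact subset_empty_iff.mp (Subtype.coe_le_coe.mpr h2)

lemma wd_map_top (hBtop : Set.univ ∈ B) (hCtop : Set.univ ∈ C) (e : B ≃o C) :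
    (e ⟨Set.univ, hBtop⟩ : Set Y) = Set.univ := by
  have h : e.symm ⟨Set.univ, hCtop⟩ ≤ (⟨Set.univ, hBtop⟩ : B) := by
    rw [← Subtype.coe_le_coe]
    exact subset_univ _
  have h2 : (⟨Set.univ, hCtop⟩ : C) ≤ e ⟨Set.univ, hBtop⟩ :=
    e.symm_apply_le.mp h
  exact eq_univ_of_univ_subset (Subtype.coe_le_coe.mpr h2)

lemma wd_map_inter (hBinter : ∀ a ∈ B, ∀ b ∈ B, a ∩ b ∈ B)
    (hCinter : ∀ a ∈ C, ∀ b ∈ C, a ∩ b ∈ C) (e : B ≃o C) (b₁ b₂ : B) :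
    (e ⟨↑b₁ ∩ ↑b₂, hBinter _ b₁.2 _ b₂.2⟩ : Set Y) = ↑(e b₁) ∩ ↑(e b₂) := by
  apply subset_antisymm
  · apply subset_inter
    · exact Subtype.coe_le_coe.mpr (e.monotone (by rw [← Subtype.coe_le_coe]; exact inter_subset_left))
    · exact Subtype.coe_le_coe.mpr (e.monotone (by rw [← Subtype.coe_le_coe]; exact inter_subset_right))
  · set c : C := ⟨↑(e b₁) ∩ ↑(e b₂), hCinter _ (e b₁).2 _ (e b₂).2⟩ with hc
    have h1 : e.symm c ≤ b₁ := by
      rw [OrderIso.symm_apply_le]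
      rw [← Subtype.coe_le_coe]
      exact inter_subset_left
    have h2 : e.symm c ≤ b₂ := by
      rw [OrderIso.symm_apply_le]
      rw [← Subtype.coe_le_coe]
      exact inter_subset_right
    have h3 : e.symm c ≤ ⟨↑b₁ ∩ ↑b₂, hBinter _ b₁.2 _ b₂.2⟩ := by
      rw [← Subtype.coe_le_coe]
      exact subset_inter (Subtype.coe_le_coe.mpr h1) (Subtype.coe_le_coe.mpr h2)
    have h4 : c ≤ e ⟨↑b₁ ∩ ↑b₂, hBinter _ b₁.2 _ b₂.2⟩ := by
      rw [← OrderIso.symm_apply_le]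
      exact h3
    exact Subtype.coe_le_coe.mpr h4

lemma wd_map_union (hBunion : ∀ a ∈ B, ∀ b ∈ B, a ∪ b ∈ B)
    (hCunion : ∀ a ∈ C, ∀ b ∈ C, a ∪ b ∈ C) (e : B ≃o C) (b₁ b₂ : B) :
    (e ⟨↑b₁ ∪ ↑b₂, hBunion _ b₁.2 _ b₂.2⟩ : Set Y) = ↑(e b₁) ∪ ↑(e b₂) := by
  apply subset_antisymm
  · set c : C := ⟨↑(e b₁) ∪ ↑(e b₂), hCunion _ (e b₁).2 _ (e b₂).2⟩ with hc
    have h1 : b₁ ≤ e.symm c := by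
      rw [OrderIso.le_symm_apply]
      rw [← Subtype.coe_le_coe]
      exact subset_union_left
    have h2 : b₂ ≤ e.symm c := by
      rw [OrderIso.le_symm_apply]
      rw [← Subtype.coe_le_coe]
      exact subset_union_right
    have h3 : (⟨↑b₁ ∪ ↑b₂, hBunion _ b₁.2 _ b₂.2⟩ : B) ≤ e.symm c := by
      rw [← Subtype.coe_le_coe]
      exact union_subset (Subtype.coe_le_coe.mpr h1) (Subtype.coe_le_coe.mpr h2)
    have h4 : e ⟨↑b₁ ∪ ↑b₂, hBunion _ b₁.2 _ b₂.2⟩ ≤ c := by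
      rw [← OrderIso.le_symm_apply]
      exact h3
    exact Subtype.coe_le_coe.mpr h4
  · apply union_subset
    · exact Subtype.coe_le_coe.mpr (e.monotone (by rw [← Subtype.coe_le_coe]; exact subset_union_left))
    · exact Subtype.coe_le_coe.mpr (e.monotone (by rw [← Subtype.coe_le_coe]; exact subset_union_right))

/-- The transfer lemma: if `y` lies in `e b` for every basic closed set `b` containing `x`,
then `x` lies in `e.symm c` for every basic closed set `c` containing `y`. -/
lemma wd_transfer [TopologicalSpace X] [CompactSpace X] [T2Space X]
    (hBclosed : ∀ b ∈ B, IsClosed b)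
    (hBbot : ∅ ∈ B) (hBtop : Set.univ ∈ B)
    (hBinter : ∀ a ∈ B, ∀ b ∈ B, a ∩ b ∈ B)
    (hBbase : ∀ s : Set X, IsClosed s → ∃ T ⊆ B, s = ⋂₀ T)
    (hCbot : ∅ ∈ C)
    (hCinter : ∀ a ∈ C, ∀ b ∈ C, a ∩ b ∈ C)
    (e : B ≃o C) {x : X} {y : Y}
    (h : ∀ b : B, x ∈ (b : Set X) → y ∈ (e b : Set Y)) :
    ∀ c : C, y ∈ (c : Set Y) → x ∈ (e.symm c : Set X) := by
  intro c hyc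
  by_contra hx
  have hopen : IsOpen ((e.symm c : Set X))ᶜ := (hBclosed _ (e.symm c).2).isOpen_compl
  obtain ⟨b', hb'B, hxb', hb'sub⟩ :=
    wd_point_in B hBclosed hBtop hBinter hBbase hopen hx
  have hy1 : y ∈ (e ⟨b', hb'B⟩ : Set Y) := h _ hxb'
  have hy2 : y ∈ (e (e.symm c) : Set Y) := by rw [e.apply_symm_apply]; exact hyc
  have hdisj : b' ∩ (e.symm c : Set X) = ∅ := by
    apply subset_empty_iff.mp
    intro z ⟨hz1, hz2⟩
    exact hb'sub hz1 hz2
  have hkey := wd_map_inter hBinter hCinter e ⟨b', hb'B⟩ (e.symm c)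
  have heq : (⟨b' ∩ (e.symm c : Set X), hBinter _ hb'B _ (e.symm c).2⟩ : B)
      = ⟨∅, hBbot⟩ := Subtype.ext hdisj
  rw [heq, wd_map_bot hBbot hCbot e] at hkey
  have : y ∈ (∅ : Set Y) := hkey ▸ ⟨hy1, hy2⟩
  exact this

/-- Existence and uniqueness of the image point. -/
lemma wd_key [TopologicalSpace Y] [CompactSpace Y] [T2Space Y]
    (hCclosed : ∀ c ∈ C, IsClosed c)
    (hBbot : ∅ ∈ B) (hBtop : Set.univ ∈ B)
    (hBunion : ∀ a ∈ B, ∀ b ∈ B, a ∪ b ∈ B)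
    (hBinter : ∀ a ∈ B, ∀ b ∈ B, a ∩ b ∈ B)
    (hCbot : ∅ ∈ C) (hCtop : Set.univ ∈ C)
    (hCunion : ∀ a ∈ C, ∀ b ∈ C, a ∪ b ∈ C)
    (hCbase : ∀ s : Set Y, IsClosed s → ∃ T ⊆ C, s = ⋂₀ T)
    (e : B ≃o C) (x : X) :
    ∃! y : Y, ∀ b : B, x ∈ (b : Set X) → y ∈ (e b : Set Y) := by
  -- existence
  have hne : ∀ b : B, (b : Set X).Nonempty → ((e b : Set Y)).Nonempty := by
    intro b hb
    rw [nonempty_iff_ne_empty] at hb ⊢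
    intro hcontra
    apply hb
    have : e b = ⟨∅, hCbot⟩ := Subtype.ext hcontra
    have hb2 : b = e.symm ⟨∅, hCbot⟩ := by rw [← this, e.symm_apply_apply]
    have := wd_map_bot hCbot hBbot e.symm
    rw [hb2]
    exact this
  haveI : Nonempty {b : B // x ∈ (b : Set X)} :=
    ⟨⟨⟨Set.univ, hBtop⟩, mem_univ x⟩⟩
  have hex : (⋂ i : {b : B // x ∈ (b : Set X)}, (e i.1 : Set Y)).Nonempty := by
    apply IsCompact.nonempty_iInter_of_directed_nonempty_isCompact_isClosed
    · intro i j
      refine ⟨⟨⟨↑i.1 ∩ ↑j.1, hBinter _ i.1.2 _ j.1.2⟩, ⟨i.2, j.2⟩⟩, ?_, ?_⟩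
      · exact Subtype.coe_le_coe.mpr (e.monotone
          (by rw [← Subtype.coe_le_coe]; exact inter_subset_left))
      · exact Subtype.coe_le_coe.mpr (e.monotone
          (by rw [← Subtype.coe_le_coe]; exact inter_subset_right))
    · exact fun i => hne _ ⟨x, i.2⟩
    · exact fun i => (hCclosed _ (e i.1).2).isCompact
    · exact fun i => hCclosed _ (e i.1).2
  obtain ⟨y, hy⟩ := hex
  have hyP : ∀ b : B, x ∈ (b : Set X) → y ∈ (e b : Set Y) :=
    fun b hb => mem_iInter.mp hy ⟨b, hb⟩
  refine ⟨y, hyP, ?_⟩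
  -- uniqueness
  intro y' hy'
  by_contra hne'
  obtain ⟨c₁, hc₁, c₂, hc₂, hcover, hy'c₂, hyc₁⟩ := wd_sep C hCbase hne'
  -- here y' plays role of "y" and y of "y'" in wd_sep
  have hmain : x ∈ (e.symm ⟨c₁, hc₁⟩ : Set X) ∪ (e.symm ⟨c₂, hc₂⟩ : Set X) := by
    have h1 := wd_map_union hCunion hBunion e.symm ⟨c₁, hc₁⟩ ⟨c₂, hc₂⟩
    have h2 : (⟨c₁ ∪ c₂, hCunion _ hc₁ _ hc₂⟩ : C) = ⟨Set.univ, hCtop⟩ :=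
      Subtype.ext hcover
    rw [h2, wd_map_top hCtop hBtop e.symm] at h1
    rw [← h1]
    exact mem_univ x
  rcases hmain with hx1 | hx2
  · have := hyP (e.symm ⟨c₁, hc₁⟩) hx1
    rw [e.apply_symm_apply] at this
    exact hyc₁ this
  · have := hy' (e.symm ⟨c₂, hc₂⟩) hx2
    rw [e.apply_symm_apply] at this
    exact hy'c₂ this

end WallmanAux

/-- Wallman duality: two compact Hausdorff spaces with isomorphic lattice bases
for their closed sets are homeomorphic. Here `B` and `C` are bases for the
closed sets (every closed set is an intersection of members), closed under
finite unions and intersections and containing `∅` and the whole space, and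
`e` is a lattice (equivalently, order) isomorphism between them. -/
theorem homeomorph_of_latticeBase_orderIso
    (X Y : Type*) [TopologicalSpace X] [TopologicalSpace Y]
    [CompactSpace X] [T2Space X] [CompactSpace Y] [T2Space Y]
    (B : Set (Set X)) (C : Set (Set Y))
    (hBclosed : ∀ b ∈ B, IsClosed b) (hCclosed : ∀ c ∈ C, IsClosed c)
    (hBbot : ∅ ∈ B) (hBtop : Set.univ ∈ B)
    (hCbot : ∅ ∈ C) (hCtop : Set.univ ∈ C)
    (hBunion : ∀ a ∈ B, ∀ b ∈ B, a ∪ b ∈ B)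
    (hBinter : ∀ a ∈ B, ∀ b ∈ B, a ∩ b ∈ B)
    (hCunion : ∀ a ∈ C, ∀ b ∈ C, a ∪ b ∈ C)
    (hCinter : ∀ a ∈ C, ∀ b ∈ C, a ∩ b ∈ C)
    (hBbase : ∀ s : Set X, IsClosed s → ∃ T ⊆ B, s = ⋂₀ T)
    (hCbase : ∀ s : Set Y, IsClosed s → ∃ T ⊆ C, s = ⋂₀ T)
    (e : B ≃o C) :
    Nonempty (X ≃ₜ Y) := by
  classical
  have hf := fun x : X => wd_key hCclosed hBbot hBtop hBunion hBinter hCbot hCtop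
    hCunion hCbase e x
  have hg := fun y : Y => wd_key hBclosed hCbot hCtop hCunion hCinter hBbot hBtop
    hBunion hBbase e.symm y
  simp only [ExistsUnique] at hf hg
  choose f hfP hfU using hf
  choose g hgP hgU using hg
  have htrans : ∀ x, ∀ c : C, f x ∈ (c : Set Y) → x ∈ (e.symm c : Set X) :=
    fun x => wd_transfer hBclosed hBbot hBtop hBinter hBbase hCbot hCinter e (hfP x)
  have htrans' : ∀ y, ∀ b : B, g y ∈ (b : Set X) → y ∈ (e b : Set Y) := by
    intro y b hb
    have := wd_transfer hCclosed hCbot hCtop hCinter hCbase hBbot hBinter e.symm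
      (hgP y) b hb
    rwa [OrderIso.symm_symm] at this
  have hgf : ∀ x, g (f x) = x := fun x => (hgU (f x) x (htrans x)).symm
  have hfg : ∀ y, f (g y) = y := fun y => (hfU (g y) y (htrans' y)).symm
  let E : X ≃ Y := ⟨f, g, hgf, hfg⟩
  have hpre : ∀ c : C, f ⁻¹' (c : Set Y) = (e.symm c : Set X) := by
    intro c
    ext x
    constructor
    · exact fun h => htrans x c h
    · intro h
      have := hfP x (e.symm c) h
      rwa [e.apply_symm_apply] at this
  have hcont : Continuous f := by
    rw [continuous_iff_isClosed]
    intro s hs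
    obtain ⟨T, hTC, hTeq⟩ := hCbase s hs
    rw [hTeq, Set.preimage_sInter]
    apply isClosed_biInter
    intro t ht
    rw [show f ⁻¹' t = (e.symm ⟨t, hTC ht⟩ : Set X) from hpre ⟨t, hTC ht⟩]
    exact hBclosed _ (e.symm ⟨t, hTC ht⟩).2
  exact ⟨Continuous.homeoOfEquivCompactToT2 (f := E) hcont⟩
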